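/- Discrete charge conservation Casimir: consider the discrete dynamics Ė_z = −(ω_p/ω_c) M₀⁻¹ ṽ_z and ṅ = −d₀ M₀⁻¹ ṽ_z (where d₀ is the discrete derivative matrix, M₀ the invertible mass matrix, and ṽ_z : ℝ → ℝᴺ an arbitrary continuous function of time). Then the quantity d₀ E_z(t) − (ω_p/ω_c) n(t) is constant in time; in particular, if d₀ E_z(0) = (ω_p/ω_c) n(0) (discrete Gauss law), then d₀ E_z(t) = (ω_p/ω_c) n(t) for all t. -/

import Mathlib

/-- Discrete charge conservation Casimir: `d₀ E_z − (ω_p/ω_c) n` is constant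
along the discrete dynamics, so the discrete Gauss law is preserved. -/
theorem stmt_19 (N₀ N₁ : ℕ)
    (d₀ : Matrix (Fin N₁) (Fin N₀) ℝ)
    (M₀ : Matrix (Fin N₀) (Fin N₀) ℝ) (hM₀ : IsUnit M₀)
    (ωp ωc : ℝ) (hωp : ωp ≠ 0) (hωc : ωc ≠ 0)
    (vz : ℝ → (Fin N₀ → ℝ)) (hvz : Continuous vz)
    (Ez : ℝ → (Fin N₀ → ℝ)) (n : ℝ → (Fin N₁ → ℝ))
    (hEz : ∀ t : ℝ, HasDerivAt Ez (-((ωp / ωc) • (M₀⁻¹.mulVec (vz t)))) t)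
    (hn : ∀ t : ℝ, HasDerivAt n (-(d₀.mulVec (M₀⁻¹.mulVec (vz t)))) t) :
    (∀ s t : ℝ,
      d₀.mulVec (Ez s) - (ωp / ωc) • n s = d₀.mulVec (Ez t) - (ωp / ωc) • n t) ∧
    (d₀.mulVec (Ez 0) = (ωp / ωc) • n 0 →
      ∀ t : ℝ, d₀.mulVec (Ez t) = (ωp / ωc) • n t) := by
  set L : (Fin N₀ → ℝ) →L[ℝ] (Fin N₁ → ℝ) := (Matrix.mulVecLin d₀).toContinuousLinearMap with hL
  have hF : ∀ t : ℝ, HasDerivAt (fun t => d₀.mulVec (Ez t) - (ωp / ωc) • n t) 0 t := by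
    intro t
    have h1 : HasDerivAt (fun t => L (Ez t)) (L (-((ωp / ωc) • (M₀⁻¹.mulVec (vz t))))) t :=
      (L.hasFDerivAt.comp_hasDerivAt t (hEz t))
    have h2 := (hn t).const_smul (ωp / ωc)
    have := h1.sub h2
    have e1 : (fun t => d₀.mulVec (Ez t) - (ωp / ωc) • n t) = (fun t => L (Ez t)) - (ωp / ωc) • n := by
      funext x
      simp [hL, Matrix.mulVec_neg, Matrix.mulVec_smul, ← Matrix.mulVec_mulVec]
    have e2 : (0 : Fin N₁ → ℝ) = L (-((ωp / ωc) • M₀⁻¹.mulVec (vz t))) - (ωp / ωc) • -d₀.mulVec (M₀⁻¹.mulVec (vz t)) := by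
      simp [hL, Matrix.mulVec_neg, Matrix.mulVec_smul, ← Matrix.mulVec_mulVec]
    rw [e1, e2]
    exact this
  have hconst : ∀ s t : ℝ,
      d₀.mulVec (Ez s) - (ωp / ωc) • n s = d₀.mulVec (Ez t) - (ωp / ωc) • n t := by
    intro s t
    exact is_const_of_deriv_eq_zero (fun x => (hF x).differentiableAt)
      (fun x => (hF x).deriv) s t
  refine ⟨hconst, fun h0 t => ?_⟩
  have := hconst t 0
  rw [h0] at this
  rw [sub_self, sub_eq_zero] at this
  exact this
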